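/- Let V > 0, let Z be a real random variable taking values in [-V, V] almost surely with E[Z] = a/n for a positive integer n and a > 0, and suppose E[exp(-η Z)] = 1 for some η > 0 with a/(V n) < (cosh(V η) - 1)/sinh(V η). Then E[exp(-(η/2) Z)] ≤ 1 - 0.18 η a / ((max(V η, 1)) · n). -/

import Mathlib

open MeasureTheory Real

noncomputable def gfun (β u : ℝ) : ℝ := (1 - β)/2 * u^2 - u + (1 + β)/2 + β * Real.log u

lemma gfun_hasDeriv (β u : ℝ) (hu : 0 < u) :
    HasDerivAt (gfun β) ((u - 1) * ((1-β)*u - β) / u) u := by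
  have h1 : HasDerivAt (fun u:ℝ => u^2) (2*u) u := by simpa using hasDerivAt_pow 2 u
  have h2 : HasDerivAt Real.log u⁻¹ u := Real.hasDerivAt_log hu.ne'
  have h : HasDerivAt (gfun β)
      ((1-β)/2 * (2*u) - 1 + β * u⁻¹) u := by
    unfold gfun
    exact (((h1.const_mul ((1-β)/2)).sub (hasDerivAt_id u)).add_const ((1+β)/2)).add
      (h2.const_mul β)
  convert h using 1
  field_simp
  ring

lemma gfun_one (β : ℝ) : gfun β 1 = 0 := by simp [gfun]; ring

lemma gfun_contOn (β : ℝ) {D : Set ℝ} (hD : D ⊆ Set.Ioi 0) : ContinuousOn (gfun β) D :=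
  fun x hx => ((gfun_hasDeriv β x (hD hx)).continuousAt).continuousWithinAt

lemma gfun_diffOn (β : ℝ) {D : Set ℝ} (hD : D ⊆ Set.Ioi 0) : DifferentiableOn ℝ (gfun β) D :=
  fun x hx => ((gfun_hasDeriv β x (hD hx)).differentiableAt).differentiableWithinAt

lemma gfun_nonneg (β : ℝ) (hβ0 : 0 < β) (hβ : β ≤ 0.36) (s u : ℝ)
    (hs0 : 0 < s) (hgs : 0 ≤ gfun β s) (hsu : s ≤ u) : 0 ≤ gfun β u := by
  have h1β : (0:ℝ) < 1 - β := by norm_num at hβ ⊢; linarith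
  set u₀ : ℝ := β / (1 - β) with hu₀def
  have hu₀0 : 0 < u₀ := div_pos hβ0 h1β
  have hu₀ : u₀ ≤ 9/16 := by
    rw [hu₀def, div_le_iff₀ h1β]; norm_num at hβ ⊢; linarith
  rcases le_total u 1 with hu1 | hu1
  · rcases le_total u u₀ with huu | huu
    · -- s ≤ u ≤ u₀ : monotone on [s, u₀]
      have hsub : Set.Icc s u₀ ⊆ Set.Ioi 0 := fun x hx => lt_of_lt_of_le hs0 hx.1
      have mono : MonotoneOn (gfun β) (Set.Icc s u₀) := by
        apply monotoneOn_of_deriv_nonneg (convex_Icc _ _) (gfun_contOn β hsub)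
        · exact (gfun_diffOn β (fun x hx => hsub (interior_subset hx)))
        · intro x hx
          rw [interior_Icc] at hx
          have hx0 : 0 < x := hs0.trans hx.1
          rw [(gfun_hasDeriv β x hx0).deriv]
          have h1 : x - 1 ≤ 0 := by
            have := hx.2.le.trans hu₀
            linarith
          have h2 : (1-β)*x - β ≤ 0 := by
            have : (1-β) * x ≤ (1-β) * u₀ := by
              apply mul_le_mul_of_nonneg_left hx.2.le h1β.le
            rw [hu₀def] at this
            rw [mul_div_cancel₀ _ h1β.ne'] at this
            linarith
          apply div_nonneg (mul_nonneg_of_nonpos_of_nonpos h1 h2) hx0.le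
      have := mono ⟨le_refl s, hsu.trans huu⟩ ⟨hsu, huu⟩ hsu
      linarith
    · -- u₀ ≤ u ≤ 1 : antitone on [u₀, 1]
      have hsub : Set.Icc u₀ 1 ⊆ Set.Ioi 0 := fun x hx => lt_of_lt_of_le hu₀0 hx.1
      have anti : AntitoneOn (gfun β) (Set.Icc u₀ 1) := by
        apply antitoneOn_of_deriv_nonpos (convex_Icc _ _) (gfun_contOn β hsub)
        · exact (gfun_diffOn β (fun x hx => hsub (interior_subset hx)))
        · intro x hx
          rw [interior_Icc] at hx
          have hx0 : 0 < x := hu₀0.trans hx.1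
          rw [(gfun_hasDeriv β x hx0).deriv]
          have h1 : x - 1 ≤ 0 := by linarith [hx.2]
          have h2 : 0 ≤ (1-β)*x - β := by
            have : (1-β) * u₀ ≤ (1-β) * x := by
              apply mul_le_mul_of_nonneg_left hx.1.le h1β.le
            rw [hu₀def, mul_div_cancel₀ _ h1β.ne'] at this
            linarith
          apply div_nonpos_of_nonpos_of_nonneg (mul_nonpos_of_nonpos_of_nonneg h1 h2) hx0.le
      have h1u : u₀ ≤ 1 := hu₀.trans (by norm_num)
      have := anti ⟨huu, hu1⟩ ⟨h1u, le_refl 1⟩ hu1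
      rw [gfun_one] at this
      linarith
  · -- 1 ≤ u : monotone on [1, u]
    have hsub : Set.Icc (1:ℝ) u ⊆ Set.Ioi 0 := fun x hx => lt_of_lt_of_le one_pos hx.1
    have mono : MonotoneOn (gfun β) (Set.Icc 1 u) := by
      apply monotoneOn_of_deriv_nonneg (convex_Icc _ _) (gfun_contOn β hsub)
      · exact (gfun_diffOn β (fun x hx => hsub (interior_subset hx)))
      · intro x hx
        rw [interior_Icc] at hx
        have hx0 : 0 < x := one_pos.trans hx.1
        rw [(gfun_hasDeriv β x hx0).deriv]
        have h1 : 0 ≤ x - 1 := by linarith [hx.1]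
        have h2 : 0 ≤ (1-β)*x - β := by nlinarith [hx.1]
        positivity
    have := mono ⟨le_refl 1, hu1⟩ ⟨hu1, le_refl u⟩ hu1
    rw [gfun_one] at this
    linarith



lemma exp_half_lt : Real.exp (1/2 : ℝ) < 16/9 := by
  have h : Real.exp (1/2 : ℝ) * Real.exp (1/2 : ℝ) = Real.exp 1 := by
    rw [← Real.exp_add]; norm_num
  have h1 := Real.exp_one_lt_d9
  have h2 := Real.exp_pos (1/2 : ℝ)
  nlinarith [sq_nonneg (Real.exp (1/2:ℝ) - 16/9)]

lemma exp_half_gt : (25/16 : ℝ) < Real.exp (1/2 : ℝ) := by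
  have h : Real.exp (1/2 : ℝ) * Real.exp (1/2 : ℝ) = Real.exp 1 := by
    rw [← Real.exp_add]; norm_num
  have h1 := Real.exp_one_gt_d9
  have h2 := Real.exp_pos (1/2 : ℝ)
  nlinarith

lemma gfun_endpoint (L : ℝ) (hL : 0 < L) :
    0 ≤ gfun (0.36 / max L 1) (Real.exp (-(L/2))) := by
  set s := Real.exp (-(L/2)) with hsdef
  have hs0 : 0 < s := Real.exp_pos _
  have hs1 : s < 1 := Real.exp_lt_one_iff.2 (by linarith)
  -- key inequality L*s < 1 - s^2  (from t < sinh t)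
  have hsinv : Real.exp (L/2) = 1/s := by
    rw [hsdef, Real.exp_neg, one_div, inv_inv]
  have hLs : L * s < 1 - s^2 := by
    have h := (Real.self_lt_sinh_iff).2 (by linarith : 0 < L/2)
    rw [Real.sinh_eq, hsinv] at h
    have : L < 1/s - s := by linarith
    have := (mul_lt_mul_of_pos_right this hs0)
    rw [sub_mul, div_mul_cancel₀ _ hs0.ne'] at this
    nlinarith
  have hlogs : Real.log s = -(L/2) := Real.log_exp _
  rcases le_total L 1 with hL1 | hL1
  · -- M = 1, β = 0.36, s ≥ exp(-1/2) > 9/16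
    have hM : max L 1 = 1 := max_eq_right hL1
    have hs916 : (9:ℝ)/16 ≤ s := by
      have h1 : Real.exp (-(1/2):ℝ) ≤ s := Real.exp_le_exp.2 (by linarith)
      have h2 : Real.exp (-(1/2):ℝ) = 1 / Real.exp (1/2:ℝ) := by
        simp [Real.exp_neg]
      have h3 := exp_half_lt
      have h4 := Real.exp_pos (1/2:ℝ)
      rw [h2] at h1
      have : (9:ℝ)/16 ≤ 1 / Real.exp (1/2:ℝ) := by
        rw [le_div_iff₀ h4]; nlinarith
      linarith
    rw [hM]
    unfold gfun
    rw [hlogs]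
    norm_num
    nlinarith [sq_nonneg (s-1), hLs, mul_nonneg (mul_nonneg (sq_nonneg (s-1)) hs0.le) (by linarith : (0:ℝ) ≤ 16*s - 9)]
  · -- M = L, β = 0.36/L
    have hM : max L 1 = L := max_eq_left hL1
    have hs064 : s ≤ 0.64 := by
      have h1 : s ≤ Real.exp (-(1/2):ℝ) := Real.exp_le_exp.2 (by linarith)
      have h2 : Real.exp (-(1/2):ℝ) = 1 / Real.exp (1/2:ℝ) := by
        simp [Real.exp_neg]
      have h3 := exp_half_gt
      have h4 := Real.exp_pos (1/2:ℝ)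
      have : (1:ℝ) / Real.exp (1/2:ℝ) ≤ 0.64 := by
        rw [div_le_iff₀ h4]; nlinarith
      linarith
    rw [hM]
    unfold gfun
    rw [hlogs]
    have hL0 : (0:ℝ) < L := hL
    have hkey : 0.18 * s ≤ 0.18/L * (1 - s^2) := by
      rw [div_mul_eq_mul_div, le_div_iff₀ hL0]
      nlinarith
    have hexp : (1 - 0.36/L)/2 * s^2 - s + (1 + 0.36/L)/2 + 0.36/L * (-(L/2))
        = 0.5*s^2 - s + 0.32 + 0.18/L*(1-s^2) := by
      field_simp
      ring
    rw [hexp]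
    nlinarith [hkey, hs064, hs1]




lemma key_ineq (L : ℝ) (hL : 0 < L) (x : ℝ) (hx1 : -1 ≤ x) (hx2 : x ≤ 1) :
    Real.exp (-(L/2) * x) ≤ (1/2 - 0.18 / max L 1) * Real.exp (-L * x)
      + (1/2 + 0.18 / max L 1) - (0.18 * L / max L 1) * x := by
  set M := max L 1 with hMdef
  have hM1 : (1:ℝ) ≤ M := le_max_right _ _
  have hM0 : (0:ℝ) < M := by linarith
  set β : ℝ := 0.36 / M with hβdef
  have hβ0 : 0 < β := by positivity
  have hβ36 : β ≤ 0.36 := by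
    rw [hβdef, div_le_iff₀ hM0]; nlinarith
  set u := Real.exp (-(L/2) * x) with hudef
  set s := Real.exp (-(L/2)) with hsdef
  have hsu : s ≤ u := Real.exp_le_exp.2 (by nlinarith)
  have hu2 : Real.exp (-L * x) = u^2 := by
    rw [hudef, sq, ← Real.exp_add]
    ring_nf
  have hlog : Real.log u = -(L/2) * x := Real.log_exp _
  have hg : 0 ≤ gfun β u :=
    gfun_nonneg β hβ0 hβ36 s u (Real.exp_pos _) (gfun_endpoint L hL) hsu
  unfold gfun at hg
  rw [hlog] at hg
  rw [hu2]
  have expand : (1/2 - 0.18/M) * u^2 + (1/2 + 0.18/M) - 0.18*L/M*x - u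
      = (1-β)/2 * u^2 - u + (1+β)/2 + β * (-(L/2)*x) := by
    rw [hβdef]
    field_simp
    ring
  linarith [expand ▸ hg]


/-- **Stochastic mixability concentration for `[-V, V]`-valued excess losses.**
Let `Z` take values in `[-V, V]` a.s. with `E[Z] = a/n` for `a > 0`, and suppose
`E[exp(-η Z)] = 1` for some `η > 0` with `a/(V n) < (cosh(V η) - 1)/sinh(V η)`.
Then `E[exp(-(η/2) Z)] ≤ 1 - 0.18 η a / (max (V η) 1 · n)`. -/
theorem stochastic_mixability_concentration_bounded
    {Ω : Type*} [MeasurableSpace Ω] (μ : Measure Ω) [IsProbabilityMeasure μ]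
    (V : ℝ) (hV : 0 < V)
    (Z : Ω → ℝ) (hZmeas : Measurable Z)
    (hZbdd : ∀ᵐ ω ∂μ, Z ω ∈ Set.Icc (-V) V)
    (n : ℕ) (hn : 0 < n) (a : ℝ) (ha : 0 < a)
    (hmean : ∫ ω, Z ω ∂μ = a / n)
    (η : ℝ) (hη : 0 < η)
    (hcgf : ∫ ω, Real.exp (-η * Z ω) ∂μ = 1)
    (hint : a / (V * n) < (Real.cosh (V * η) - 1) / Real.sinh (V * η)) :
    ∫ ω, Real.exp (-(η / 2) * Z ω) ∂μ ≤ 1 - 0.18 * η * a / (max (V * η) 1 * n) := by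
  set M := max (V * η) 1 with hMdef
  have hM1 : (1:ℝ) ≤ M := le_max_right _ _
  have hM0 : (0:ℝ) < M := by linarith
  -- integrability
  have hZint : Integrable Z μ := by
    apply (integrable_const V).mono' hZmeas.aestronglyMeasurable
    filter_upwards [hZbdd] with ω h
    rw [Real.norm_eq_abs]
    exact abs_le.2 ⟨h.1, h.2⟩
  have hexpint : ∀ c : ℝ, Integrable (fun ω => Real.exp (c * Z ω)) μ := by
    intro c
    apply (integrable_const (Real.exp (|c| * V))).mono'
    · exact (Real.measurable_exp.comp ((measurable_const.mul hZmeas))).aestronglyMeasurable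
    · filter_upwards [hZbdd] with ω h
      rw [Real.norm_eq_abs, Real.abs_exp]
      apply Real.exp_le_exp.2
      calc c * Z ω ≤ |c * Z ω| := le_abs_self _
        _ = |c| * |Z ω| := abs_mul _ _
        _ ≤ |c| * V := by
            apply mul_le_mul_of_nonneg_left (abs_le.2 ⟨h.1, h.2⟩) (abs_nonneg _)
  -- pointwise bound
  have hpt : ∀ᵐ ω ∂μ, Real.exp (-(η/2) * Z ω)
      ≤ (1/2 - 0.18/M) * Real.exp (-η * Z ω) + (1/2 + 0.18/M) - (0.18*η/M) * Z ω := by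
    filter_upwards [hZbdd] with ω h
    have h1 : -1 ≤ Z ω / V := by
      rw [neg_le, ← neg_div, div_le_one hV]; linarith [h.1]
    have h2 : Z ω / V ≤ 1 := (div_le_one hV).2 h.2
    have hk := key_ineq (V*η) (by positivity) (Z ω / V) h1 h2
    have e1 : -(V*η/2) * (Z ω / V) = -(η/2) * Z ω := by field_simp
    have e2 : -(V*η) * (Z ω / V) = -η * Z ω := by field_simp
    have e3 : (0.18 * (V*η) / M) * (Z ω / V) = (0.18*η/M) * Z ω := by
      field_simp
    rw [e1, e2, e3] at hk
    exact hk
  -- integrate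
  have hRHSint : Integrable (fun ω => (1/2 - 0.18/M) * Real.exp (-η * Z ω)
      + (1/2 + 0.18/M) - (0.18*η/M) * Z ω) μ := by
    exact (((hexpint (-η)).const_mul _).add (integrable_const _)).sub (hZint.const_mul _)
  have hle := integral_mono_ae (hexpint (-(η/2))) hRHSint hpt
  have hcalc : ∫ ω, ((1/2 - 0.18/M) * Real.exp (-η * Z ω)
      + (1/2 + 0.18/M) - (0.18*η/M) * Z ω) ∂μ
      = (1/2 - 0.18/M) * 1 + (1/2 + 0.18/M) - (0.18*η/M) * (a/n) := by
    have hA : Integrable (fun ω => (1/2 - 0.18/M) * Real.exp (-η * Z ω)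
        + (1/2 + 0.18/M)) μ := ((hexpint (-η)).const_mul _).add (integrable_const _)
    have hB : Integrable (fun ω => (0.18*η/M) * Z ω) μ := hZint.const_mul _
    rw [integral_sub hA hB,
      integral_add ((hexpint (-η)).const_mul _) (integrable_const _),
      integral_const_mul, integral_const_mul, hcgf, hmean, integral_const]
    simp
  rw [hcalc] at hle
  have hfinal : (1/2 - 0.18/M) * 1 + (1/2 + 0.18/M) - (0.18*η/M) * (a/n)
      = 1 - 0.18 * η * a / (M * n) := by
    have hn0 : (n:ℝ) ≠ 0 := Nat.cast_ne_zero.2 hn.ne'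
    field_simp
    ring
  rw [hfinal] at hle
  exact hle
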